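/- Let α(t) = c₀(1+t)^β with c₀ > 0 and β > −1, and Λ(t) = ∫_t^∞ exp(−∫_t^r α(u) du) dr. Then there exist constants 0 < c₁ ≤ c₂ such that for all t ≥ 0, c₁ ∫_0^t α(s)^{-1} ds ≤ ∫_0^t α(s) Λ(s)^2 ds ≤ c₂ ∫_0^t α(s)^{-1} ds. -/

import Mathlib

open MeasureTheory Filter Set Real

lemma ftc_shift (c₀ p : ℝ) (hp : 0 < p) {t r : ℝ} (ht : 0 ≤ t) (htr : t ≤ r) :
    ∫ u in t..r, c₀ * (1 + u) ^ (p - 1) = (c₀ / p) * ((1 + r) ^ p - (1 + t) ^ p) := by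
  have h : ∀ u ∈ Set.uIcc t r, HasDerivAt (fun v => (c₀ / p) * (1 + v) ^ p)
      (c₀ * (1 + u) ^ (p - 1)) u := by
    intro u hu
    rw [Set.uIcc_of_le htr] at hu
    have hu0 : (0:ℝ) < 1 + u := by linarith [hu.1]
    have h1 : HasDerivAt (fun v : ℝ => 1 + v) 1 u := (hasDerivAt_id u).const_add 1
    have h2 : HasDerivAt (fun y : ℝ => y ^ p) (p * (1 + u) ^ (p - 1)) (1 + u) :=
      Real.hasDerivAt_rpow_const (Or.inl hu0.ne')
    have h3 := (h2.comp u h1).const_mul (c₀ / p)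
    refine h3.congr_deriv ?_
    rw [mul_one, ← mul_assoc, div_mul_cancel₀ _ hp.ne']
  rw [intervalIntegral.integral_eq_sub_of_hasDerivAt h ?_]
  · ring
  · apply ContinuousOn.intervalIntegrable
    apply continuousOn_const.mul
    apply ContinuousOn.rpow_const (continuousOn_const.add (continuousOn_id))
    intro u hu
    rw [Set.uIcc_of_le htr] at hu
    exact Or.inl (by show (1:ℝ) + u ≠ 0; intro h0; linarith [hu.1])

lemma exp_bound_piece (p : ℝ) (hp : 0 < p) {t r : ℝ} (ht : 0 ≤ t) (htr : t ≤ r)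
    (hr2 : r ≤ t + (1 + t) ^ (1 - p)) :
    (1 + r) ^ p - (1 + t) ^ p ≤ p * max 1 (2 ^ (p - 1)) := by
  have hx : (1:ℝ) ≤ 1 + t := by linarith
  have hx0 : (0:ℝ) < 1 + t := by linarith
  have hhle : (1 + t) ^ (1 - p) ≤ 1 + t := by
    calc (1 + t) ^ (1 - p) ≤ (1 + t) ^ (1:ℝ) :=
      Real.rpow_le_rpow_of_exponent_le hx (by linarith)
    _ = 1 + t := Real.rpow_one _
  have key := ftc_shift p p hp ht htr
  have hmax : (0:ℝ) ≤ max 1 (2 ^ (p - 1)) := le_trans zero_le_one (le_max_left _ _)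
  have hub : ∀ u ∈ Set.Icc t r, p * (1 + u) ^ (p - 1) ≤ p * (max 1 (2 ^ (p-1)) * (1 + t) ^ (p - 1)) := by
    intro u hu
    have hu1 : 1 + t ≤ 1 + u := by linarith [hu.1]
    have hu2 : 1 + u ≤ 2 * (1 + t) := by
      have := hu.2
      have : u ≤ t + (1 + t) ^ (1 - p) := le_trans hu.2 hr2
      linarith
    apply mul_le_mul_of_nonneg_left _ hp.le
    rcases le_or_gt 1 p with h1 | h1
    · calc (1 + u) ^ (p - 1) ≤ (2 * (1 + t)) ^ (p - 1) :=
        Real.rpow_le_rpow (by linarith) hu2 (by linarith)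
      _ = 2 ^ (p - 1) * (1 + t) ^ (p - 1) := Real.mul_rpow (by norm_num) hx0.le
      _ ≤ max 1 (2 ^ (p-1)) * (1 + t) ^ (p - 1) := by
          apply mul_le_mul_of_nonneg_right (le_max_right _ _) (Real.rpow_nonneg hx0.le _)
    · calc (1 + u) ^ (p - 1) ≤ (1 + t) ^ (p - 1) :=
        Real.rpow_le_rpow_of_nonpos hx0 hu1 (by linarith)
      _ ≤ max 1 (2 ^ (p-1)) * (1 + t) ^ (p - 1) := by
          nlinarith [Real.rpow_nonneg hx0.le (p-1), le_max_left (1:ℝ) (2 ^ (p-1))]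
  have hcont : IntervalIntegrable (fun u => p * (1 + u) ^ (p - 1)) volume t r := by
    apply ContinuousOn.intervalIntegrable
    apply continuousOn_const.mul
    apply ContinuousOn.rpow_const (continuousOn_const.add (continuousOn_id))
    intro u hu
    rw [Set.uIcc_of_le htr] at hu
    exact Or.inl (by show (1:ℝ) + u ≠ 0; intro h0; linarith [hu.1])
  have hmono := intervalIntegral.integral_mono_on htr hcont
    (intervalIntegrable_const) hub
  rw [key, intervalIntegral.integral_const, smul_eq_mul] at hmono
  have hpp : p / p = 1 := div_self hp.ne'
  rw [hpp, one_mul] at hmono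
  -- hmono : (1+r)^p - (1+t)^p ≤ (r - t) * (p * (max ... * (1+t)^(p-1)))
  have hrt : r - t ≤ (1 + t) ^ (1 - p) := by linarith
  have hcancel : (1 + t) ^ (1 - p) * (1 + t) ^ (p - 1) = 1 := by
    rw [← Real.rpow_add hx0]
    norm_num
  calc (1 + r) ^ p - (1 + t) ^ p ≤ (r - t) * (p * (max 1 (2 ^ (p-1)) * (1 + t) ^ (p - 1))) := hmono
    _ ≤ (1 + t) ^ (1 - p) * (p * (max 1 (2 ^ (p-1)) * (1 + t) ^ (p - 1))) := by
        apply mul_le_mul_of_nonneg_right hrt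
        positivity
    _ = p * max 1 (2 ^ (p-1)) * ((1 + t) ^ (1 - p) * (1 + t) ^ (p - 1)) := by ring
    _ = p * max 1 (2 ^ (p-1)) := by rw [hcancel, mul_one]

lemma core_exp (Kh q : ℝ) (hK : 0 < Kh) (hq : 0 < q) {z : ℝ} (hz : 1 ≤ z) :
    z ^ q ≤ Real.exp (Kh - q + q * Real.log (q / Kh)) * Real.exp (Kh * (z - 1)) := by
  have hz0 : (0:ℝ) < z := by linarith
  rw [← Real.exp_add, Real.rpow_def_of_pos hz0]
  apply Real.exp_le_exp.2
  have h1 : Real.log ((Kh / q) * z) ≤ (Kh / q) * z - 1 :=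
    Real.log_le_sub_one_of_pos (by positivity)
  rw [Real.log_mul (by positivity) hz0.ne'] at h1
  have h2 : Real.log (q / Kh) = - Real.log (Kh / q) := by
    rw [← Real.log_inv]
    congr 1
    rw [inv_div]
  have h3 : Real.log z ≤ (Kh / q) * z - 1 - Real.log (Kh / q) := by linarith
  have h4 := mul_le_mul_of_nonneg_left h3 hq.le
  have h5 : q * ((Kh / q) * z) = Kh * z := by field_simp
  rw [h2]
  nlinarith [h4, h5]

noncomputable def Dconst (K p : ℝ) : ℝ :=
  1 + Real.exp (K / 2 - (1 - p) / p + (1 - p) / p * Real.log ((1 - p) / p / (K / 2)))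

lemma one_le_Dconst (K p : ℝ) : 1 ≤ Dconst K p :=
  le_add_of_nonneg_right (Real.exp_pos _).le

lemma star_ineq (K p : ℝ) (hK : 0 < K) (hp : 0 < p) {x y : ℝ} (hx : 1 ≤ x) (hxy : x ≤ y) :
    (y / x) ^ (1 - p) ≤ Dconst K p * Real.exp (K / 2 * (y ^ p - x ^ p)) := by
  have hx0 : (0:ℝ) < x := by linarith
  have hy0 : (0:ℝ) < y := by linarith
  have hΔ : 0 ≤ y ^ p - x ^ p := sub_nonneg.2 (Real.rpow_le_rpow hx0.le hxy hp.le)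
  have hexp1 : (1:ℝ) ≤ Real.exp (K / 2 * (y ^ p - x ^ p)) :=
    Real.one_le_exp (by positivity)
  have hs : (1:ℝ) ≤ y / x := (one_le_div hx0).2 hxy
  rcases le_or_gt 1 p with h1 | h1
  · have hle1 : (y / x) ^ (1 - p) ≤ 1 :=
      Real.rpow_le_one_of_one_le_of_nonpos hs (by linarith)
    calc (y / x) ^ (1 - p) ≤ 1 := hle1
      _ ≤ Dconst K p * Real.exp (K / 2 * (y ^ p - x ^ p)) := by
        nlinarith [one_le_Dconst K p]
  · set q := (1 - p) / p with hqdef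
    have hq : 0 < q := div_pos (by linarith) hp
    have hz : (1:ℝ) ≤ (y / x) ^ p := Real.one_le_rpow hs hp.le
    have key : (y / x) ^ (1 - p) = ((y / x) ^ p) ^ q := by
      rw [← Real.rpow_mul (by positivity : (0:ℝ) ≤ y / x)]
      congr 1
      rw [hqdef]
      field_simp
    have hzineq : (y / x) ^ p - 1 ≤ y ^ p - x ^ p := by
      have hdiv : (y / x) ^ p = y ^ p / x ^ p := Real.div_rpow hy0.le hx0.le p
      have hxp1 : (1:ℝ) ≤ x ^ p := Real.one_le_rpow hx hp.le
      have hxpne : x ^ p ≠ 0 := by positivity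
      have hmul : (y / x) ^ p * x ^ p = y ^ p := by
        rw [hdiv]; field_simp
      nlinarith [hz]
    have hcore := core_exp (K / 2) q (by positivity) hq hz
    calc (y / x) ^ (1 - p) = ((y / x) ^ p) ^ q := key
      _ ≤ Real.exp (K / 2 - q + q * Real.log (q / (K / 2))) *
            Real.exp (K / 2 * ((y / x) ^ p - 1)) := hcore
      _ ≤ Dconst K p * Real.exp (K / 2 * (y ^ p - x ^ p)) := by
          apply mul_le_mul
          · rw [Dconst, hqdef]
            exact le_add_of_nonneg_left zero_le_one
          · exact Real.exp_le_exp.2 (by nlinarith)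
          · exact (Real.exp_pos _).le
          · have := one_le_Dconst K p; linarith

lemma hasDerivAt_aux (Kc p C xp : ℝ) {r : ℝ} (hr : (0:ℝ) < 1 + r) :
    HasDerivAt (fun s : ℝ => C * Real.exp (-(Kc * ((1 + s) ^ p - xp))))
      (-(C * Kc * p) * ((1 + r) ^ (p - 1) * Real.exp (-(Kc * ((1 + r) ^ p - xp))))) r := by
  have h1 : HasDerivAt (fun s : ℝ => 1 + s) 1 r := (hasDerivAt_id r).const_add 1
  have h2 : HasDerivAt (fun y : ℝ => y ^ p) (p * (1 + r) ^ (p - 1)) (1 + r) :=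
    Real.hasDerivAt_rpow_const (Or.inl hr.ne')
  have h3 := (h2.comp r h1)
  have h4 := ((h3.sub_const xp).const_mul (-Kc)).exp.const_mul C
  refine (h4.congr_deriv ?_).congr_of_eventuallyEq (Eventually.of_forall fun s => ?_)
  all_goals simp only [Function.comp_apply]; ring_nf

lemma tendsto_aux (Kc p C xp : ℝ) (hK : 0 < Kc) (hp : 0 < p) :
    Tendsto (fun r : ℝ => C * Real.exp (-(Kc * ((1 + r) ^ p - xp)))) atTop (nhds 0) := by
  have h1 : Tendsto (fun r : ℝ => (1 + r) ^ p) atTop atTop :=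
    (tendsto_rpow_atTop hp).comp (tendsto_atTop_add_const_left atTop 1 tendsto_id)
  have h2 : Tendsto (fun r : ℝ => Kc * ((1 + r) ^ p - xp)) atTop atTop := by
    apply Tendsto.const_mul_atTop hK
    simpa [sub_eq_add_neg] using tendsto_atTop_add_const_right atTop (-xp) h1
  have h3 : Tendsto (fun r : ℝ => -(Kc * ((1 + r) ^ p - xp))) atTop atBot :=
    tendsto_neg_atBot_iff.mpr h2
  have h4 := (Real.tendsto_exp_atBot.comp h3).const_mul C
  simpa using h4

lemma psi_cont (K p xp : ℝ) {t : ℝ} (ht : 0 ≤ t) :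
    ContinuousOn (fun r : ℝ => Real.exp (-(K * ((1 + r) ^ p - xp)))) (Set.Ici t) := by
  apply ContinuousOn.rexp
  apply ContinuousOn.neg
  apply continuousOn_const.mul
  apply ContinuousOn.sub _ continuousOn_const
  apply ContinuousOn.rpow_const (continuousOn_const.add (continuousOn_id))
  intro r hr
  exact Or.inl (by show (1:ℝ) + r ≠ 0; intro h0; have := hr.out; linarith)

lemma psi_upper (c₀ p : ℝ) (hc₀ : 0 < c₀) (hp : 0 < p) {t : ℝ} (ht : 0 ≤ t) :
    IntegrableOn (fun r => Real.exp (-(c₀ / p * ((1 + r) ^ p - (1 + t) ^ p)))) (Set.Ioi t) ∧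
    ∫ r in Set.Ioi t, Real.exp (-(c₀ / p * ((1 + r) ^ p - (1 + t) ^ p))) ≤
      2 * Dconst (c₀ / p) p / c₀ * (1 + t) ^ (1 - p) := by
  set K := c₀ / p with hKdef
  have hK : 0 < K := div_pos hc₀ hp
  set x := 1 + t with hxdef
  have hx : (1:ℝ) ≤ x := by rw [hxdef]; linarith
  have hx0 : (0:ℝ) < x := by linarith
  set D := Dconst K p with hDdef
  have hD : (1:ℝ) ≤ D := one_le_Dconst K p
  set C := -(2 * D / c₀) * x ^ (1 - p) with hCdef
  have hxpow : (0:ℝ) < x ^ (1 - p) := Real.rpow_pos_of_pos hx0 _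
  have hscal : -(C * (K / 2) * p) = D * x ^ (1 - p) := by
    rw [hCdef, hKdef]
    field_simp
  set φ : ℝ → ℝ := fun r => -(C * (K / 2) * p) * ((1 + r) ^ (p - 1) *
      Real.exp (-(K / 2 * ((1 + r) ^ p - x ^ p)))) with hφdef
  have hderiv : ∀ r ∈ Set.Ici t, HasDerivAt
      (fun r : ℝ => C * Real.exp (-(K / 2 * ((1 + r) ^ p - x ^ p)))) (φ r) r := by
    intro r hr
    exact hasDerivAt_aux (K / 2) p C (x ^ p) (by have := hr.out; linarith)
  have hφpos : ∀ r ∈ Set.Ioi t, 0 ≤ φ r := by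
    intro r hr
    have hr0 : (0:ℝ) ≤ 1 + r := by have := hr.out; linarith
    have h1 : (0:ℝ) < D * x ^ (1 - p) := by positivity
    simp only [hφdef]
    rw [hscal]
    exact mul_nonneg h1.le (mul_nonneg (Real.rpow_nonneg hr0 (p - 1))
      (Real.exp_pos (-(K / 2 * ((1 + r) ^ p - x ^ p)))).le)
  have htends := tendsto_aux (K / 2) p C (x ^ p) (by positivity) hp
  have hIntφ : IntegrableOn φ (Set.Ioi t) :=
    integrableOn_Ioi_deriv_of_nonneg' hderiv hφpos htends
  have hvalφ : ∫ r in Set.Ioi t, φ r = -C := by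
    rw [integral_Ioi_of_hasDerivAt_of_nonneg' hderiv hφpos htends]
    simp [hxdef]
  -- pointwise bound ψ ≤ φ
  have hpt : ∀ r ∈ Set.Ioi t, Real.exp (-(K * ((1 + r) ^ p - x ^ p))) ≤ φ r := by
    intro r hr
    have hrt : t ≤ r := le_of_lt hr.out
    have hxy : x ≤ 1 + r := by rw [hxdef]; linarith
    have hy0 : (0:ℝ) < 1 + r := by linarith
    set Δ := (1 + r) ^ p - x ^ p with hΔdef
    have hΔ0 : 0 ≤ Δ := sub_nonneg.2 (Real.rpow_le_rpow hx0.le hxy hp.le)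
    set A := ((1 + r) / x) ^ (1 - p) with hAdef
    have hA0 : 0 < A := Real.rpow_pos_of_pos (by positivity) _
    have hstar : A ≤ D * Real.exp (K / 2 * Δ) := star_ineq K p hK hp hx hxy
    have hAinv : x ^ (1 - p) * (1 + r) ^ (p - 1) = A⁻¹ := by
      rw [hAdef, ← Real.inv_rpow (by positivity), inv_div, Real.div_rpow hx0.le hy0.le,
        show p - 1 = -(1 - p) by ring, Real.rpow_neg hy0.le]
      ring
    have hφr : φ r = D * Real.exp (-(K / 2 * Δ)) * A⁻¹ := by
      simp only [hφdef]
      rw [hscal, ← hAinv]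
      ring
    rw [hφr]
    have hkey : A * Real.exp (-(K * Δ)) ≤ D * Real.exp (-(K / 2 * Δ)) := by
      have := mul_le_mul_of_nonneg_right hstar (Real.exp_pos (-(K * Δ))).le
      calc A * Real.exp (-(K * Δ)) ≤ D * Real.exp (K / 2 * Δ) * Real.exp (-(K * Δ)) := this
        _ = D * Real.exp (-(K / 2 * Δ)) := by
            rw [mul_assoc, ← Real.exp_add]; ring_nf
    calc Real.exp (-(K * Δ)) = A * Real.exp (-(K * Δ)) * A⁻¹ := by
          field_simp
      _ ≤ D * Real.exp (-(K / 2 * Δ)) * A⁻¹ := by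
          apply mul_le_mul_of_nonneg_right hkey (by positivity)
  have hmeas : AEStronglyMeasurable (fun r => Real.exp (-(K * ((1 + r) ^ p - x ^ p))))
      (volume.restrict (Set.Ioi t)) :=
    ((psi_cont K p (x ^ p) ht).mono Set.Ioi_subset_Ici_self).aestronglyMeasurable
      measurableSet_Ioi
  have hψInt : IntegrableOn (fun r => Real.exp (-(K * ((1 + r) ^ p - x ^ p)))) (Set.Ioi t) := by
    apply Integrable.mono' hIntφ hmeas
    rw [ae_restrict_iff' measurableSet_Ioi]
    apply Filter.Eventually.of_forall
    intro r hr
    rw [Real.norm_eq_abs, abs_of_pos (Real.exp_pos _)]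
    exact hpt r hr
  constructor
  · exact hψInt
  · calc ∫ r in Set.Ioi t, Real.exp (-(K * ((1 + r) ^ p - x ^ p)))
        ≤ ∫ r in Set.Ioi t, φ r :=
          setIntegral_mono_on hψInt hIntφ measurableSet_Ioi hpt
    _ = -C := hvalφ
    _ = 2 * D / c₀ * x ^ (1 - p) := by rw [hCdef]; ring

lemma psi_lower (c₀ p : ℝ) (hc₀ : 0 < c₀) (hp : 0 < p) {t : ℝ} (ht : 0 ≤ t)
    (hInt : IntegrableOn (fun r => Real.exp (-(c₀ / p * ((1 + r) ^ p - (1 + t) ^ p))))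
      (Set.Ioi t)) :
    (1 + t) ^ (1 - p) * Real.exp (-(c₀ * max 1 (2 ^ (p - 1)))) ≤
      ∫ r in Set.Ioi t, Real.exp (-(c₀ / p * ((1 + r) ^ p - (1 + t) ^ p))) := by
  set K := c₀ / p with hKdef
  have hK : 0 < K := div_pos hc₀ hp
  set x := 1 + t with hxdef
  have hx0 : (0:ℝ) < x := by rw [hxdef]; linarith
  set h := x ^ (1 - p) with hhdef
  have hh : 0 < h := Real.rpow_pos_of_pos hx0 _
  set c := Real.exp (-(c₀ * max 1 (2 ^ (p - 1)))) with hcdef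
  have hlow : ∀ r ∈ Set.Ioc t (t + h), c ≤ Real.exp (-(K * ((1 + r) ^ p - x ^ p))) := by
    intro r hr
    apply Real.exp_le_exp.2
    have hΔ := exp_bound_piece p hp ht hr.1.le (by rw [← hhdef]; exact hr.2)
    have : K * ((1 + r) ^ p - x ^ p) ≤ K * (p * max 1 (2 ^ (p - 1))) :=
      mul_le_mul_of_nonneg_left hΔ hK.le
    have hKp : K * (p * max 1 (2 ^ (p - 1))) = c₀ * max 1 (2 ^ (p - 1)) := by
      rw [hKdef]; field_simp
    linarith [this, hKp.le]
  have hsub : Set.Ioc t (t + h) ⊆ Set.Ioi t := Set.Ioc_subset_Ioi_self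
  have hstep1 : ∫ r in Set.Ioc t (t + h), Real.exp (-(K * ((1 + r) ^ p - x ^ p))) ≤
      ∫ r in Set.Ioi t, Real.exp (-(K * ((1 + r) ^ p - x ^ p))) := by
    apply setIntegral_mono_set hInt
    · exact Filter.Eventually.of_forall (fun r => (Real.exp_pos _).le)
    · exact Filter.Eventually.of_forall (fun r hr => hsub hr)
  have hstep2 : c * (volume (Set.Ioc t (t + h))).toReal ≤
      ∫ r in Set.Ioc t (t + h), Real.exp (-(K * ((1 + r) ^ p - x ^ p))) := by
    apply setIntegral_ge_of_const_le_real measurableSet_Ioc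
    · exact (measure_Ioc_lt_top).ne
    · exact hlow
    · exact hInt.mono_set hsub
  have hvol : (volume (Set.Ioc t (t + h))).toReal = h := by
    rw [Real.volume_Ioc, ENNReal.toReal_ofReal (by linarith)]
    ring
  rw [hvol] at hstep2
  calc x ^ (1 - p) * c = c * h := by rw [hhdef]; ring
    _ ≤ _ := le_trans hstep2 hstep1

lemma lam_eq (c₀ β : ℝ) (hc₀ : 0 < c₀) (hβ : -1 < β)
    (α Λ : ℝ → ℝ) (hα : ∀ t, α t = c₀ * (1 + t) ^ β)
    (hΛ : ∀ t, Λ t = ∫ r in Set.Ioi t, Real.exp (- ∫ u in t..r, α u))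
    {t : ℝ} (ht : 0 ≤ t) :
    Λ t = ∫ r in Set.Ioi t,
      Real.exp (-(c₀ / (β + 1) * ((1 + r) ^ (β + 1) - (1 + t) ^ (β + 1)))) := by
  rw [hΛ t]
  apply setIntegral_congr_fun measurableSet_Ioi
  intro r hr
  have hrt : t ≤ r := le_of_lt hr
  have hp : 0 < β + 1 := by linarith
  have heq : Set.EqOn (fun u => α u) (fun u => c₀ * (1 + u) ^ ((β + 1) - 1)) (Set.uIcc t r) := by
    intro u _
    simp only [hα u]
    norm_num
  have h2 : (∫ u in t..r, α u) = (c₀ / (β + 1)) * ((1 + r) ^ (β + 1) - (1 + t) ^ (β + 1)) := by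
    rw [intervalIntegral.integral_congr heq, ftc_shift c₀ (β + 1) hp ht hrt]
  show Real.exp (- ∫ u in t..r, α u) = _
  rw [h2]

lemma alpha_lam_bounds (c₀ β : ℝ) (hc₀ : 0 < c₀) (hβ : -1 < β)
    (α Λ : ℝ → ℝ) (hα : ∀ t, α t = c₀ * (1 + t) ^ β)
    (hΛ : ∀ t, Λ t = ∫ r in Set.Ioi t, Real.exp (- ∫ u in t..r, α u))
    {t : ℝ} (ht : 0 ≤ t) :
    c₀ * Real.exp (-(c₀ * max 1 (2 ^ β))) ≤ α t * Λ t ∧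
    α t * Λ t ≤ 2 * Dconst (c₀ / (β + 1)) (β + 1) := by
  set p := β + 1 with hpdef
  have hp : 0 < p := by rw [hpdef]; linarith
  have hx0 : (0:ℝ) < 1 + t := by linarith
  have hU := psi_upper c₀ p hc₀ hp ht
  have hL := psi_lower c₀ p hc₀ hp ht hU.1
  have hleq := lam_eq c₀ β hc₀ hβ α Λ hα hΛ ht
  rw [show β + 1 = p from rfl] at hleq
  rw [← hleq] at hL
  have hU2 := hU.2
  rw [← hleq] at hU2
  rw [show p - 1 = β from by rw [hpdef]; ring] at hL
  have hαt : α t = c₀ * (1 + t) ^ (p - 1) := by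
    rw [hα t, show p - 1 = β from by rw [hpdef]; ring]
  have hαpos : 0 < α t := by rw [hαt]; positivity
  have hcancel : (1 + t) ^ (p - 1) * (1 + t) ^ (1 - p) = 1 := by
    rw [← Real.rpow_add hx0]; norm_num
  constructor
  · have h1 : α t * ((1 + t) ^ (1 - p) * Real.exp (-(c₀ * max 1 (2 ^ β)))) ≤ α t * Λ t :=
      mul_le_mul_of_nonneg_left hL hαpos.le
    have h2 : α t * ((1 + t) ^ (1 - p) * Real.exp (-(c₀ * max 1 (2 ^ β)))) =
        c₀ * Real.exp (-(c₀ * max 1 (2 ^ β))) := by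
      rw [hαt]
      calc c₀ * (1 + t) ^ (p - 1) * ((1 + t) ^ (1 - p) * Real.exp (-(c₀ * max 1 (2 ^ β))))
          = c₀ * ((1 + t) ^ (p - 1) * (1 + t) ^ (1 - p)) * Real.exp (-(c₀ * max 1 (2 ^ β))) := by
            ring
        _ = c₀ * Real.exp (-(c₀ * max 1 (2 ^ β))) := by rw [hcancel]; ring
    linarith
  · have h1 : α t * Λ t ≤ α t * (2 * Dconst (c₀ / p) p / c₀ * (1 + t) ^ (1 - p)) :=
      mul_le_mul_of_nonneg_left hU2 hαpos.le
    have h2 : α t * (2 * Dconst (c₀ / p) p / c₀ * (1 + t) ^ (1 - p)) =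
        2 * Dconst (c₀ / p) p := by
      rw [hαt]
      field_simp
      calc (1 + t) ^ (p - 1) * Dconst (c₀ / p) p * (1 + t) ^ (1 - p)
          = Dconst (c₀ / p) p * ((1 + t) ^ (p - 1) * (1 + t) ^ (1 - p)) := by ring
        _ = Dconst (c₀ / p) p := by rw [hcancel]; ring
    rw [h2] at h1
    exact h1

theorem stmt_3 (c₀ β : ℝ) (hc₀ : 0 < c₀) (hβ : -1 < β)
    (α Λ : ℝ → ℝ)
    (hα : ∀ t, α t = c₀ * (1 + t) ^ β)
    (hΛ : ∀ t, Λ t = ∫ r in Set.Ioi t, Real.exp (- ∫ u in t..r, α u)) :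
    ∃ c₁ c₂ : ℝ, 0 < c₁ ∧ c₁ ≤ c₂ ∧ ∀ t ≥ (0:ℝ),
      c₁ * (∫ s in (0:ℝ)..t, (α s)⁻¹) ≤ (∫ s in (0:ℝ)..t, α s * (Λ s) ^ 2) ∧
      (∫ s in (0:ℝ)..t, α s * (Λ s) ^ 2) ≤ c₂ * (∫ s in (0:ℝ)..t, (α s)⁻¹) := by
  have hp : 0 < β + 1 := by linarith
  set m := c₀ * Real.exp (-(c₀ * max 1 (2 ^ β))) with hmdef
  set M := 2 * Dconst (c₀ / (β + 1)) (β + 1) with hMdef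
  have hm : 0 < m := by
    rw [hmdef]; positivity
  have hbounds : ∀ s : ℝ, 0 ≤ s → m ≤ α s * Λ s ∧ α s * Λ s ≤ M :=
    fun s hs => alpha_lam_bounds c₀ β hc₀ hβ α Λ hα hΛ hs
  have hmM : m ≤ M := le_trans (hbounds 0 le_rfl).1 (hbounds 0 le_rfl).2
  have hM : 0 < M := lt_of_lt_of_le hm hmM
  have hαpos : ∀ s : ℝ, 0 ≤ s → 0 < α s := by
    intro s hs
    rw [hα s]
    have h1 : (0:ℝ) < 1 + s := by linarith
    positivity
  have hptB : ∀ s : ℝ, 0 ≤ s →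
      m ^ 2 * (α s)⁻¹ ≤ α s * Λ s ^ 2 ∧ α s * Λ s ^ 2 ≤ M ^ 2 * (α s)⁻¹ := by
    intro s hs
    have h0 := hbounds s hs
    have hα0 := hαpos s hs
    have hid : α s * Λ s ^ 2 = (α s * Λ s) ^ 2 * (α s)⁻¹ := by
      field_simp
    have hsq1 : m ^ 2 ≤ (α s * Λ s) ^ 2 := pow_le_pow_left₀ hm.le h0.1 2
    have hsq2 : (α s * Λ s) ^ 2 ≤ M ^ 2 := pow_le_pow_left₀ (le_trans hm.le h0.1) h0.2 2
    constructor
    · rw [hid]; exact mul_le_mul_of_nonneg_right hsq1 (inv_nonneg.2 hα0.le)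
    · rw [hid]; exact mul_le_mul_of_nonneg_right hsq2 (inv_nonneg.2 hα0.le)
  -- measurable representation of Λ on [0, ∞)
  have hW0 : IntegrableOn (fun r : ℝ => Real.exp (-(c₀ / (β + 1) * (1 + r) ^ (β + 1))))
      (Set.Ioi (0:ℝ)) := by
    have h0 := (psi_upper c₀ (β + 1) hc₀ hp (le_refl (0:ℝ))).1
    have h1 := h0.const_mul (Real.exp (-(c₀ / (β + 1))))
    apply IntegrableOn.congr_fun h1 _ measurableSet_Ioi
    intro r hr
    beta_reduce
    rw [← Real.exp_add]
    congr 1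
    rw [show (1:ℝ) + 0 = 1 by norm_num, Real.one_rpow]
    ring
  set W : ℝ → ℝ :=
    fun s => ∫ r in Set.Ioi (max s 0), Real.exp (-(c₀ / (β + 1) * (1 + r) ^ (β + 1)))
    with hWdef
  have hWanti : Antitone W := by
    intro s₁ s₂ h12
    apply setIntegral_mono_set (hW0.mono_set (Set.Ioi_subset_Ioi (le_max_right s₁ 0)))
      (Filter.Eventually.of_forall fun r => (Real.exp_pos _).le)
    exact HasSubset.Subset.eventuallyLE (Set.Ioi_subset_Ioi (max_le_max h12 le_rfl))
  have hWmeas : Measurable W := hWanti.measurable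
  have hΛrep : ∀ s : ℝ, 0 ≤ s →
      Λ s = Real.exp (c₀ / (β + 1) * (1 + s) ^ (β + 1)) * W s := by
    intro s hs
    rw [lam_eq c₀ β hc₀ hβ α Λ hα hΛ hs, hWdef]
    simp only [max_eq_left hs]
    rw [← integral_const_mul]
    apply setIntegral_congr_fun measurableSet_Ioi
    intro r hr
    beta_reduce
    rw [← Real.exp_add]
    congr 1
    ring
  refine ⟨m ^ 2, M ^ 2, by positivity, pow_le_pow_left₀ hm.le hmM 2, ?_⟩
  intro t ht
  have hcontα : ContinuousOn α (Set.Icc 0 t) := by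
    apply ContinuousOn.congr _ (fun s (hs : s ∈ Set.Icc 0 t) => hα s)
    apply continuousOn_const.mul
    apply ContinuousOn.rpow_const (continuousOn_const.add continuousOn_id)
    intro s hs
    exact Or.inl (by show (1:ℝ) + s ≠ 0; intro h0; have := hs.1; linarith)
  have hcontinv : ContinuousOn (fun s => (α s)⁻¹) (Set.Icc 0 t) :=
    hcontα.inv₀ (fun s hs => (hαpos s hs.1).ne')
  have hint_inv : IntervalIntegrable (fun s => (α s)⁻¹) volume 0 t := by
    apply ContinuousOn.intervalIntegrable
    rwa [Set.uIcc_of_le ht]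
  have hcontE : ContinuousOn (fun s : ℝ => Real.exp (c₀ / (β + 1) * (1 + s) ^ (β + 1)))
      (Set.Icc 0 t) := by
    apply ContinuousOn.rexp
    apply continuousOn_const.mul
    apply ContinuousOn.rpow_const (continuousOn_const.add continuousOn_id)
    intro s hs
    exact Or.inl (by show (1:ℝ) + s ≠ 0; intro h0; have := hs.1; linarith)
  have hAESM : AEStronglyMeasurable (fun s => α s * Λ s ^ 2)
      (volume.restrict (Set.Ioc 0 t)) := by
    have h1 : AEMeasurable (fun s => α s *
        (Real.exp (c₀ / (β + 1) * (1 + s) ^ (β + 1)) * W s) ^ 2)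
        (volume.restrict (Set.Ioc 0 t)) := by
      apply AEMeasurable.mul
      · exact (hcontα.mono Set.Ioc_subset_Icc_self).aemeasurable measurableSet_Ioc
      · apply AEMeasurable.pow
        · apply AEMeasurable.mul
          · exact (hcontE.mono Set.Ioc_subset_Icc_self).aemeasurable measurableSet_Ioc
          · exact hWmeas.aemeasurable
        · exact aemeasurable_const
    apply (h1.aestronglyMeasurable).congr
    rw [Filter.EventuallyEq, ae_restrict_iff' measurableSet_Ioc]
    apply Filter.Eventually.of_forall
    intro s hs
    rw [hΛrep s hs.1.le]
  have hbint : IntegrableOn (fun s => M ^ 2 * (α s)⁻¹) (Set.Ioc 0 t) := by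
    apply IntegrableOn.mono_set _ Set.Ioc_subset_Icc_self
    exact (continuousOn_const.mul hcontinv).integrableOn_Icc
  have hIntΛ : IntervalIntegrable (fun s => α s * Λ s ^ 2) volume 0 t := by
    rw [intervalIntegrable_iff_integrableOn_Ioc_of_le ht]
    apply Integrable.mono' hbint hAESM
    rw [ae_restrict_iff' measurableSet_Ioc]
    apply Filter.Eventually.of_forall
    intro s hs
    have h0 := hptB s hs.1.le
    have hnn : 0 ≤ α s * Λ s ^ 2 := by
      have h2 : 0 ≤ m ^ 2 * (α s)⁻¹ :=
        mul_nonneg (by positivity) (inv_nonneg.2 (hαpos s hs.1.le).le)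
      linarith [h0.1]
    rw [Real.norm_eq_abs, abs_of_nonneg hnn]
    exact h0.2
  constructor
  · calc m ^ 2 * ∫ s in (0:ℝ)..t, (α s)⁻¹ = ∫ s in (0:ℝ)..t, m ^ 2 * (α s)⁻¹ :=
        (intervalIntegral.integral_const_mul _ _).symm
      _ ≤ ∫ s in (0:ℝ)..t, α s * Λ s ^ 2 :=
        intervalIntegral.integral_mono_on ht (hint_inv.const_mul _) hIntΛ
          (fun s hs => (hptB s hs.1).1)
  · calc (∫ s in (0:ℝ)..t, α s * Λ s ^ 2) ≤ ∫ s in (0:ℝ)..t, M ^ 2 * (α s)⁻¹ :=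
        intervalIntegral.integral_mono_on ht hIntΛ (hint_inv.const_mul _)
          (fun s hs => (hptB s hs.1).2)
      _ = M ^ 2 * ∫ s in (0:ℝ)..t, (α s)⁻¹ := intervalIntegral.integral_const_mul _ _
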